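/- Let J ⊆ ℝ be an interval, f, g : J → ℝ be continuous synchronous functions, and A, B be Hermitian n×n complex matrices with spectra contained in J. Then tr(f(A)g(A) + f(B)g(B)) ≥ (1/n)·(tr(f(A)) tr(g(B)) + tr(g(A)) tr(f(B))). -/

import Mathlib

open Matrix in
lemma trace_cfc_re' {n : ℕ} {A : Matrix (Fin n) (Fin n) ℂ} (hA : A.IsHermitian)
    (f : ℝ → ℝ) : ((cfc f A).trace).re = ∑ i, f (hA.eigenvalues i) := by
  rw [hA.cfc_eq, Matrix.IsHermitian.cfc]
  rw [Unitary.conjStarAlgAut_apply, Matrix.trace_mul_cycle]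
  rw [Unitary.coe_star_mul_self, Matrix.one_mul, Matrix.trace_diagonal]
  simp [Complex.ofReal_re]

lemma sum_chebyshev_sync {n : ℕ} (a b c d : Fin n → ℝ)
    (h : ∀ i j, a i * d j + b i * c j ≤ a i * b i + c j * d j) :
    (∑ i, a i) * (∑ j, d j) + (∑ i, b i) * (∑ j, c j) ≤
      (n : ℝ) * ((∑ i, a i * b i) + (∑ j, c j * d j)) := by
  calc (∑ i, a i) * (∑ j, d j) + (∑ i, b i) * (∑ j, c j)
      = ∑ i, ∑ j, (a i * d j + b i * c j) := by
        simp [Finset.sum_mul_sum, Finset.sum_add_distrib]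
    _ ≤ ∑ i : Fin n, ∑ j : Fin n, (a i * b i + c j * d j) := by
        apply Finset.sum_le_sum; intro i _; apply Finset.sum_le_sum; intro j _; exact h i j
    _ = (n : ℝ) * ((∑ i, a i * b i) + (∑ j, c j * d j)) := by
        simp [Finset.sum_add_distrib, Finset.mul_sum, Finset.sum_mul, mul_add, mul_comm]

/-- Trace Chebyshev inequality for synchronous functions of Hermitian matrices:
`tr(f(A)g(A) + f(B)g(B)) ≥ (1/n)(tr f(A) tr g(B) + tr g(A) tr f(B))`. -/
theorem chebyshev_trace_sync {n : ℕ} (hn : 0 < n) (J : Set ℝ) (hJ : J.OrdConnected)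
    (f g : ℝ → ℝ) (hfc : ContinuousOn f J) (hgc : ContinuousOn g J)
    (hsync : ∀ s ∈ J, ∀ t ∈ J, 0 ≤ (f t - f s) * (g t - g s))
    (A B : Matrix (Fin n) (Fin n) ℂ) (hA : A.IsHermitian) (hB : B.IsHermitian)
    (hAJ : spectrum ℝ A ⊆ J) (hBJ : spectrum ℝ B ⊆ J) :
    ((cfc f A * cfc g A + cfc f B * cfc g B).trace).re ≥
      (1 / (n : ℝ)) * (((cfc f A).trace).re * ((cfc g B).trace).re +
        ((cfc g A).trace).re * ((cfc f B).trace).re) := by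
  have hmulA : cfc f A * cfc g A = cfc (fun x => f x * g x) A := by
    rw [← cfc_mul f g A (hfc.mono hAJ) (hgc.mono hAJ)]
  have hmulB : cfc f B * cfc g B = cfc (fun x => f x * g x) B := by
    rw [← cfc_mul f g B (hfc.mono hBJ) (hgc.mono hBJ)]
  rw [Matrix.trace_add, Complex.add_re, hmulA, hmulB,
    trace_cfc_re' hA, trace_cfc_re' hB, trace_cfc_re' hA f, trace_cfc_re' hA g,
    trace_cfc_re' hB f, trace_cfc_re' hB g]
  have hαJ : ∀ i, hA.eigenvalues i ∈ J := fun i => hAJ (hA.eigenvalues_mem_spectrum_real i)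
  have hβJ : ∀ j, hB.eigenvalues j ∈ J := fun j => hBJ (hB.eigenvalues_mem_spectrum_real j)
  have key := sum_chebyshev_sync (fun i => f (hA.eigenvalues i)) (fun i => g (hA.eigenvalues i))
    (fun j => f (hB.eigenvalues j)) (fun j => g (hB.eigenvalues j)) (fun i j => by
      have := hsync _ (hαJ i) _ (hβJ j)
      nlinarith [this])
  rw [ge_iff_le]
  have hn' : (0 : ℝ) < n := by exact_mod_cast hn
  rw [one_div, inv_mul_le_iff₀ hn']
  exact key
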